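/- Let K be a field of characteristic zero, b ∈ K[x] monic squarefree nonconstant, S its shift set, b₀ the divisor of initial roots (as produced by the simple reduction construction), and b_ℓ = gcd(b₀(x-ℓ), b(x)) for ℓ ∈ S ∪ {0}. Then b = Π_{ℓ ∈ S∪{0}} b_ℓ and gcd(b_ℓ, b_j) = 1 for ℓ ≠ j. -/

import Mathlib

open Polynomial

namespace SimpleReductionAux

variable {K : Type*} [Field K]

lemma dvd_comp {p q r : K[X]} (h : p ∣ q) : p.comp r ∣ q.comp r := by
  obtain ⟨c, rfl⟩ := h
  exact ⟨c.comp r, mul_comp p c r⟩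

lemma comp_comp (p : K[X]) (t s : K) :
    (p.comp (X + C t)).comp (X + C s) = p.comp (X + C (s + t)) := by
  rw [comp_assoc, add_comp, X_comp, C_comp, add_assoc, ← C_add]

lemma comp_zero' (p : K[X]) : p.comp (X + C (0 : K)) = p := by simp

lemma comp_cancel (p : K[X]) (t : K) : (p.comp (X + C t)).comp (X + C (-t)) = p := by
  rw [comp_comp, neg_add_cancel, comp_zero']

lemma prime_shift {p : K[X]} (hp : Prime p) (t : K) : Prime (p.comp (X + C t)) := by
  have h1 : p.comp (X + C t) = algEquivAevalXAddC t p := by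
    rw [algEquivAevalXAddC_apply, comp_eq_aeval]
  rw [h1]
  exact (MulEquiv.prime_iff (algEquivAevalXAddC t).toMulEquiv).mpr hp

lemma sub_C_eq (a : K) : X - C a = X + C (-a) := by rw [map_neg, ← sub_eq_add_neg]

lemma exists_common_prime {a c : K[X]} [DecidableEq K] (ha : a ≠ 0) (h : ¬ IsCoprime a c) :
    ∃ p : K[X], Prime p ∧ p ∣ a ∧ p ∣ c := by
  have hg : ¬ IsUnit (gcd a c) := fun hu => h ((gcd_isUnit_iff a c).mp hu)
  have hg0 : gcd a c ≠ 0 := fun h0 => ha ((gcd_eq_zero_iff a c).mp h0).1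
  obtain ⟨i, hi, hid⟩ := WfDvdMonoid.exists_irreducible_factor hg hg0
  exact ⟨i, hi.prime, hid.trans (gcd_dvd_left a c), hid.trans (gcd_dvd_right a c)⟩

lemma prime_natDegree_pos {p : K[X]} (hp : Prime p) : 0 < p.natDegree := by
  rcases Nat.eq_zero_or_pos p.natDegree with h | h
  · exfalso
    have hpc := eq_C_of_natDegree_eq_zero h
    have : p.coeff 0 ≠ 0 := fun h0 => hp.ne_zero (by rw [hpc, h0, map_zero])
    exact hp.not_unit (hpc ▸ isUnit_C.mpr (isUnit_iff_ne_zero.mpr this))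
  · exact h

lemma comp_shift_ne [CharZero K] {p : K[X]} (hp : 0 < p.natDegree) {t : K} (ht : t ≠ 0) :
    p.comp (X + C t) ≠ p := by
  intro h
  have key : ∀ k : ℕ, p.eval ((k : K) * t) = p.eval 0 := by
    intro k
    induction k with
    | zero => simp
    | succ n ih =>
      have h2 := congrArg (fun q => q.eval ((n : K) * t)) h
      simp only [eval_comp, eval_add, eval_X, eval_C] at h2
      have : ((n + 1 : ℕ) : K) * t = (n : K) * t + t := by push_cast; ring
      rw [this, h2, ih]
  have hq : p - C (p.eval 0) = 0 := by
    apply eq_zero_of_infinite_isRoot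
    apply Set.infinite_of_injective_forall_mem (f := fun k : ℕ => (k : K) * t)
    · intro a b hab
      exact Nat.cast_injective (mul_right_cancel₀ ht hab)
    · intro k
      simp only [Set.mem_setOf_eq, IsRoot.def, eval_sub, eval_C, key k, sub_self]
  have : p = C (p.eval 0) := by rwa [sub_eq_zero] at hq
  rw [this] at hp
  simp at hp

end SimpleReductionAux
/-- The shift-free factorization underlying simple reduction: with `b` monic
squarefree nonconstant, `S` its shift set, `b₀` the divisor of initial roots and
`b_ℓ = gcd(b₀(x-ℓ), b(x))` for `ℓ ∈ S ∪ {0}`, one has `b = Π_ℓ b_ℓ` with the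
`b_ℓ` pairwise coprime. -/
theorem simple_reduction_factorization {K : Type*} [Field K] [CharZero K] [DecidableEq K]
    (b : Polynomial K) (hmonic : b.Monic) (hsf : Squarefree b) (hdeg : 0 < b.degree)
    (S : Finset ℕ)
    (hS : ∀ ℓ : ℕ, ℓ ∈ S ↔ (1 ≤ ℓ ∧ ¬ IsCoprime b (b.comp (Polynomial.X + Polynomial.C (ℓ : K)))))
    (b₀ : Polynomial K)
    (hb₀ : b₀ = b / S.lcm fun ℓ => gcd b (b.comp (Polynomial.X - Polynomial.C (ℓ : K))))
    (bfun : ℕ → Polynomial K)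
    (hbfun : ∀ ℓ : ℕ, bfun ℓ = gcd (b₀.comp (Polynomial.X - Polynomial.C (ℓ : K))) b) :
    (∏ ℓ ∈ insert 0 S, bfun ℓ) = b ∧
    (∀ ℓ ∈ insert 0 S, ∀ j ∈ insert 0 S, ℓ ≠ j → IsCoprime (bfun ℓ) (bfun j)) := by
  classical
  have hb0 : b ≠ 0 := hmonic.ne_zero
  set d : ℕ → K[X] := fun ℓ => gcd b (b.comp (X - C (ℓ : K))) with hd
  set L : K[X] := S.lcm d with hLdef
  have hLb : L ∣ b := Finset.lcm_dvd fun ℓ _ => gcd_dvd_left _ _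
  have hL0 : L ≠ 0 := fun h => hb0 (zero_dvd_iff.mp (h ▸ hLb))
  have hmul : b₀ * L = b := by
    rw [hb₀, mul_comm]
    exact EuclideanDomain.mul_div_cancel' hL0 hLb
  have hb₀dvd : b₀ ∣ b := ⟨L, hmul.symm⟩
  have hb₀0 : b₀ ≠ 0 := fun h => hb0 (by rw [← hmul, h, zero_mul])
  have hcopL : IsCoprime b₀ L := by
    by_contra hc
    obtain ⟨p, hp, h1, h2⟩ := SimpleReductionAux.exists_common_prime hb₀0 hc
    exact hp.not_unit (hsf p (by rw [← hmul]; exact mul_dvd_mul h1 h2))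
  -- Key 1 : coprimality of b₀ with its shifts
  have hkey1 : ∀ m : ℕ, 1 ≤ m → IsCoprime b₀ (b₀.comp (X + C (-(m : K)))) := by
    intro m hm
    by_contra hc
    obtain ⟨p, hp, hpb₀, hpc⟩ := SimpleReductionAux.exists_common_prime hb₀0 hc
    have hqb₀ : p.comp (X + C (m : K)) ∣ b₀ := by
      have h1 := SimpleReductionAux.dvd_comp (r := X + C (m : K)) hpc
      rwa [SimpleReductionAux.comp_comp, add_neg_cancel, SimpleReductionAux.comp_zero'] at h1
    have hqb : p.comp (X + C (m : K)) ∣ b := hqb₀.trans hb₀dvd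
    have hpdm : p ∣ d m := by
      show p ∣ gcd b (b.comp (X - C (m : K)))
      refine dvd_gcd (hpb₀.trans hb₀dvd) ?_
      rw [SimpleReductionAux.sub_C_eq]
      have h1 := SimpleReductionAux.dvd_comp (r := X + C (-(m : K))) hqb
      rwa [SimpleReductionAux.comp_cancel] at h1
    have hmS : m ∈ S := by
      rw [hS]
      refine ⟨hm, fun hco => ?_⟩
      have h1 : p.comp (X + C (m : K)) ∣ b.comp (X + C (m : K)) :=
        SimpleReductionAux.dvd_comp (hpb₀.trans hb₀dvd)
      exact (SimpleReductionAux.prime_shift hp ((m : K))).not_unit (hco.isUnit_of_dvd' hqb h1)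
    have hpL : p ∣ L := hpdm.trans (Finset.dvd_lcm hmS)
    exact hp.not_unit (hcopL.isUnit_of_dvd' hpb₀ hpL)
  -- Key 2 : pairwise coprimality
  have hkey2 : ∀ ℓ j : ℕ, ℓ < j →
      IsCoprime (b₀.comp (X - C (ℓ : K))) (b₀.comp (X - C (j : K))) := by
    intro ℓ j hlt
    obtain ⟨m, hm1, rfl⟩ : ∃ m, 1 ≤ m ∧ j = ℓ + m := ⟨j - ℓ, by omega, by omega⟩
    have h := (hkey1 m hm1).map (eval₂RingHom (C : K →+* K[X]) (X + C (-(ℓ : K))))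
    have e1 : (eval₂RingHom (C : K →+* K[X]) (X + C (-(ℓ : K)))) b₀
        = b₀.comp (X + C (-(ℓ : K))) := rfl
    have e2 : (eval₂RingHom (C : K →+* K[X]) (X + C (-(ℓ : K)))) (b₀.comp (X + C (-(m : K))))
        = b₀.comp (X + C (-(((ℓ + m : ℕ)) : K))) := by
      show (b₀.comp (X + C (-(m : K)))).comp (X + C (-(ℓ : K))) = _
      rw [SimpleReductionAux.comp_comp,
        show (-(ℓ : K) + -(m : K)) = (-(((ℓ + m : ℕ)) : K)) by push_cast; ring]
    rw [e1, e2] at h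
    rw [SimpleReductionAux.sub_C_eq, SimpleReductionAux.sub_C_eq]
    exact h
  have hcopfun : ∀ ℓ ∈ insert 0 S, ∀ j ∈ insert 0 S, ℓ ≠ j → IsCoprime (bfun ℓ) (bfun j) := by
    have main : ∀ ℓ j : ℕ, ℓ < j → IsCoprime (bfun ℓ) (bfun j) := by
      intro ℓ j h
      have h2 := hkey2 ℓ j h
      rw [hbfun ℓ, hbfun j]
      exact (h2.of_isCoprime_of_dvd_left (gcd_dvd_left _ _)).of_isCoprime_of_dvd_right
        (gcd_dvd_left _ _)
    intro ℓ _ j _ hne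
    rcases lt_or_gt_of_ne hne with h | h
    · exact main ℓ j h
    · exact (main j ℓ h).symm
  refine ⟨?_, hcopfun⟩
  -- product part
  have hbf0 : ∀ ℓ, bfun ℓ ≠ 0 := fun ℓ h =>
    hb0 (by rw [hbfun ℓ] at h; exact ((gcd_eq_zero_iff _ _).mp h).2)
  have hbfdvd : ∀ ℓ, bfun ℓ ∣ b := fun ℓ => (hbfun ℓ) ▸ gcd_dvd_right _ _
  have hbfmonic : ∀ ℓ, (bfun ℓ).Monic := by
    intro ℓ
    have h1 : normalize (bfun ℓ) = bfun ℓ := by rw [hbfun ℓ]; exact normalize_gcd _ _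
    rw [← h1]
    exact Polynomial.monic_normalize (hbf0 ℓ)
  have hPdvd : (∏ ℓ ∈ insert 0 S, bfun ℓ) ∣ b :=
    Finset.prod_dvd_of_coprime
      (fun ℓ hℓ j hj hne => hcopfun ℓ (Finset.mem_coe.mp hℓ) j (Finset.mem_coe.mp hj) hne)
      fun ℓ _ => hbfdvd ℓ
  -- the main claim: every prime factor of b divides some bfun ℓ
  have hclaim : ∀ r : K[X], Prime r → r ∣ b → ∃ ℓ ∈ insert 0 S, r ∣ bfun ℓ := by
    intro r hr hrb
    set T : Set ℕ := {ℓ : ℕ | r.comp (X + C (ℓ : K)) ∣ b} with hT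
    have h0T : (0 : ℕ) ∈ T := by
      show r.comp (X + C ((0 : ℕ) : K)) ∣ b
      rw [Nat.cast_zero, SimpleReductionAux.comp_zero']
      exact hrb
    have hinj : Function.Injective (fun ℓ : ℕ => normalize (r.comp (X + C (ℓ : K)))) := by
      intro ℓ j hij
      by_contra hne
      simp only at hij
      have hlc : ∀ t : K, (r.comp (X + C t)).leadingCoeff = r.leadingCoeff := by
        intro t
        rw [leadingCoeff_comp (by simp), leadingCoeff_X_add_C, one_pow, mul_one]
      have hnm : ∀ t : K, normalize (r.comp (X + C t))
          = (r.comp (X + C t)) * C ((normUnit r.leadingCoeff : Kˣ) : K) := by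
        intro t
        rw [normalize_apply, Polynomial.coe_normUnit, hlc t]
      rw [hnm, hnm] at hij
      have heq : r.comp (X + C (ℓ : K)) = r.comp (X + C (j : K)) :=
        mul_right_cancel₀ (Polynomial.C_ne_zero.mpr (Units.ne_zero _)) hij
      have h2 := congrArg (fun p : K[X] => p.comp (X + C (-(j : K)))) heq
      rw [SimpleReductionAux.comp_comp, SimpleReductionAux.comp_cancel] at h2
      have ht : (-(j : K) + (ℓ : K)) ≠ 0 := by
        intro h0
        exact hne (Nat.cast_injective (by linear_combination h0 : (ℓ : K) = (j : K)))
      exact SimpleReductionAux.comp_shift_ne (SimpleReductionAux.prime_natDegree_pos hr) ht h2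
    have hTfin : T.Finite := by
      have hsub : T ⊆ (fun ℓ : ℕ => normalize (r.comp (X + C (ℓ : K)))) ⁻¹'
          ↑(UniqueFactorizationMonoid.normalizedFactors b).toFinset := by
        intro ℓ hℓ
        have hq : Prime (r.comp (X + C (ℓ : K))) := SimpleReductionAux.prime_shift hr _
        obtain ⟨q', hq'mem, hq'assoc⟩ :=
          UniqueFactorizationMonoid.exists_mem_normalizedFactors_of_dvd hb0 hq.irreducible hℓ
        have heq : normalize (r.comp (X + C (ℓ : K))) = q' := by
          rw [normalize_eq_normalize hq'assoc.dvd hq'assoc.symm.dvd]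
          exact UniqueFactorizationMonoid.normalize_normalized_factor _ hq'mem
        simp only [Set.mem_preimage, Finset.mem_coe, Multiset.mem_toFinset, heq]
        exact hq'mem
      exact Set.Finite.subset (Set.Finite.preimage hinj.injOn (Finset.finite_toSet _)) hsub
    have hne : hTfin.toFinset.Nonempty := ⟨0, hTfin.mem_toFinset.mpr h0T⟩
    set ℓm : ℕ := hTfin.toFinset.max' hne with hℓmdef
    have hℓmT : ℓm ∈ T := hTfin.mem_toFinset.mp (hTfin.toFinset.max'_mem hne)
    have hmax : ∀ m ∈ T, m ≤ ℓm := fun m hm => hTfin.toFinset.le_max' m (hTfin.mem_toFinset.mpr hm)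
    have hqprime : Prime (r.comp (X + C (ℓm : K))) := SimpleReductionAux.prime_shift hr _
    have hqb : r.comp (X + C (ℓm : K)) ∣ b := hℓmT
    have hqb₀ : r.comp (X + C (ℓm : K)) ∣ b₀ := by
      rcases hqprime.2.2 _ _ (show r.comp (X + C (ℓm : K)) ∣ b₀ * L by rw [hmul]; exact hqb)
        with h | h
      · exact h
      · exfalso
        have hLP : L ∣ ∏ m ∈ S, d m := Finset.lcm_dvd fun m hm => Finset.dvd_prod_of_mem d hm
        obtain ⟨m, hmS, hqdm⟩ := hqprime.exists_mem_finset_dvd (h.trans hLP)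
        have hm1 : 1 ≤ m := ((hS m).mp hmS).1
        have hq2 : r.comp (X + C (ℓm : K)) ∣ b.comp (X + C (-(m : K))) := by
          have h5 : r.comp (X + C (ℓm : K)) ∣ b.comp (X - C (m : K)) :=
            hqdm.trans (gcd_dvd_right _ _)
          rwa [SimpleReductionAux.sub_C_eq] at h5
        have h3 : r.comp (X + C ((m : K) + (ℓm : K))) ∣ b := by
          have h4 := SimpleReductionAux.dvd_comp (r := X + C (m : K)) hq2
          rw [SimpleReductionAux.comp_comp] at h4
          rwa [SimpleReductionAux.comp_comp, add_neg_cancel, SimpleReductionAux.comp_zero'] at h4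
        have hmemT : ℓm + m ∈ T := by
          show r.comp (X + C ((ℓm + m : ℕ) : K)) ∣ b
          rw [show ((ℓm + m : ℕ) : K) = (m : K) + (ℓm : K) by push_cast; ring]
          exact h3
        have := hmax _ hmemT
        omega
    refine ⟨ℓm, ?_, ?_⟩
    · rcases Nat.eq_zero_or_pos ℓm with h | h
      · rw [h]; exact Finset.mem_insert_self 0 S
      · refine Finset.mem_insert_of_mem ((hS ℓm).mpr ⟨h, fun hco => ?_⟩)
        have h1 : r.comp (X + C (ℓm : K)) ∣ b.comp (X + C (ℓm : K)) :=
          SimpleReductionAux.dvd_comp hrb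
        exact hqprime.not_unit (hco.isUnit_of_dvd' hqb h1)
    · rw [hbfun ℓm, SimpleReductionAux.sub_C_eq]
      refine dvd_gcd ?_ hrb
      have h1 := SimpleReductionAux.dvd_comp (r := X + C (-(ℓm : K))) hqb₀
      rwa [SimpleReductionAux.comp_cancel] at h1
  -- conclude
  obtain ⟨c, hc⟩ := hPdvd
  have hcunit : IsUnit c := by
    by_contra hcu
    have hc0 : c ≠ 0 := fun h => hb0 (by rw [hc, h, mul_zero])
    obtain ⟨rr, hirr, hrdvd⟩ := WfDvdMonoid.exists_irreducible_factor hcu hc0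
    have hr : Prime rr := UniqueFactorizationMonoid.irreducible_iff_prime.mp hirr
    have hrb : rr ∣ b := hrdvd.trans ⟨∏ ℓ ∈ insert 0 S, bfun ℓ, by rw [hc]; ring⟩
    obtain ⟨ℓ, hℓ, hrℓ⟩ := hclaim rr hr hrb
    have hrP : rr ∣ ∏ ℓ ∈ insert 0 S, bfun ℓ := hrℓ.trans (Finset.dvd_prod_of_mem _ hℓ)
    have h2 : rr * rr ∣ b := by rw [hc]; exact mul_dvd_mul hrP hrdvd
    exact hr.not_unit (hsf rr h2)
  obtain ⟨u, hu, hcu⟩ := Polynomial.isUnit_iff.mp hcunit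
  have hPmonic : (∏ ℓ ∈ insert 0 S, bfun ℓ).Monic :=
    monic_prod_of_monic _ _ fun ℓ _ => hbfmonic ℓ
  have hu1 : u = 1 := by
    have h2 := congrArg leadingCoeff hc
    rw [hmonic.leadingCoeff, ← hcu, leadingCoeff_mul, hPmonic.leadingCoeff, one_mul,
      leadingCoeff_C] at h2
    exact h2.symm
  have hc1 : c = 1 := by rw [← hcu, hu1, map_one]
  rw [hc1, mul_one] at hc
  exact hc.symm
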